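/- Let θ ∈ (0, 1/2), let f : [0,∞) → [0,∞) be continuous, let a : [0,1] → [0,∞) be continuous with α = ∫₀¹ a(t) dt satisfying 0 < α < 1, and set β = ∫_θ^{1−θ} a(t) dt. Define (Au)(t) = ∫₀¹ ( G(t,s) + (1/(1-α)) ∫₀¹ a(τ) G(τ,s) dτ ) f(u(s)) ds. Suppose δ > 0 satisfies δ·(θ⁶/36)·((1−α+β)²/(1−α))·(1−2θ)·(1/2 + θ − θ²) ≥ 1, and ρ̂ > 0 is such that f(v) ≥ δ v for all v > ρ̂. Then for every continuous nonnegative u : [0,1] → ℝ with min_{t∈[θ,1−θ]} u(t) ≥ θ³(1−α+β)‖u‖ and θ³(1−α+β)‖u‖ ≥ ρ̂ (sup norm ‖·‖), one has ‖Au‖ ≥ ‖u‖. -/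

import Mathlib

/-- The Green's function of the fourth-order problem. -/
noncomputable def G (t s : ℝ) : ℝ :=
  if s ≤ t then (t ^ 3 * (1 - s) ^ 2 - (t - s) ^ 3) / 6
  else t ^ 3 * (1 - s) ^ 2 / 6

/-- The sup norm on `[0,1]` of a function `u : ℝ → ℝ`. -/
noncomputable def supNorm (u : ℝ → ℝ) : ℝ := ⨆ t : Set.Icc (0 : ℝ) 1, |u t|

lemma G_eq (t s : ℝ) : G t s = (t ^ 3 * (1 - s) ^ 2 - (max (t - s) 0) ^ 3) / 6 := by
  unfold G; split_ifs with h
  · rw [max_eq_left (by linarith)]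
  · rw [max_eq_right (by linarith)]; ring

lemma G_cont : Continuous (fun p : ℝ × ℝ => G p.1 p.2) := by
  simp only [G_eq]; fun_prop

lemma G_lower {t s : ℝ} (ht : t ∈ Set.Icc (0:ℝ) 1) (hs : s ∈ Set.Icc (0:ℝ) 1) :
    t ^ 3 * (s * (1 - s) ^ 2 / 6) ≤ G t s := by
  obtain ⟨ht0, ht1⟩ := ht; obtain ⟨hs0, hs1⟩ := hs
  rw [G_eq]
  have h1 : max (t - s) 0 ≤ t * (1 - s) := by
    apply max_le
    · nlinarith
    · nlinarith
  have h0 : (0:ℝ) ≤ max (t - s) 0 := le_max_right _ _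
  have h2 : (max (t - s) 0) ^ 3 ≤ (t * (1 - s)) ^ 3 := pow_le_pow_left₀ h0 h1 3
  nlinarith

lemma G_nonneg {t s : ℝ} (ht : t ∈ Set.Icc (0:ℝ) 1) (hs : s ∈ Set.Icc (0:ℝ) 1) :
    0 ≤ G t s := by
  have := G_lower ht hs
  have h1 : 0 ≤ t ^ 3 * (s * (1 - s) ^ 2 / 6) := by
    have := ht.1; have := hs.1; positivity
  linarith

lemma G_upper {t s : ℝ} (ht : t ∈ Set.Icc (0:ℝ) 1) (hs : s ∈ Set.Icc (0:ℝ) 1) :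
    G t s ≤ 1 / 6 := by
  obtain ⟨ht0, ht1⟩ := ht; obtain ⟨hs0, hs1⟩ := hs
  rw [G_eq]
  have h0 : (0:ℝ) ≤ max (t - s) 0 := le_max_right _ _
  have h1 : t ^ 3 ≤ 1 := pow_le_one₀ ht0 ht1
  have h2 : (1 - s) ^ 2 ≤ 1 := by nlinarith
  nlinarith [pow_nonneg h0 3, pow_nonneg ht0 3, sq_nonneg (1 - s)]

theorem stmt_15 (θ : ℝ) (hθ : θ ∈ Set.Ioo (0 : ℝ) (1 / 2)) (f a : ℝ → ℝ)
    (hf : ContinuousOn f (Set.Ici 0))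
    (hf0 : ∀ v ∈ Set.Ici (0 : ℝ), 0 ≤ f v)
    (ha : ContinuousOn a (Set.Icc 0 1))
    (ha0 : ∀ t ∈ Set.Icc (0 : ℝ) 1, 0 ≤ a t)
    (hα0 : 0 < ∫ t in (0 : ℝ)..1, a t)
    (hα1 : (∫ t in (0 : ℝ)..1, a t) < 1)
    (δ ρhat : ℝ) (hδ : 0 < δ)
    (hδge : 1 ≤ δ * (θ ^ 6 / 36) *
      ((1 - (∫ t in (0 : ℝ)..1, a t) + ∫ t in θ..(1 - θ), a t) ^ 2 /
        (1 - ∫ t in (0 : ℝ)..1, a t)) *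
      (1 - 2 * θ) * (1 / 2 + θ - θ ^ 2))
    (hρhat : 0 < ρhat)
    (hfδ : ∀ v : ℝ, ρhat < v → δ * v ≤ f v)
    (u Au : ℝ → ℝ)
    (hu : ContinuousOn u (Set.Icc 0 1))
    (hu0 : ∀ t ∈ Set.Icc (0 : ℝ) 1, 0 ≤ u t)
    (huK : ∀ t ∈ Set.Icc θ (1 - θ),
      θ ^ 3 * (1 - (∫ τ in (0 : ℝ)..1, a τ) + ∫ τ in θ..(1 - θ), a τ) *
        supNorm u ≤ u t)
    (hularge : ρhat ≤ θ ^ 3 *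
      (1 - (∫ τ in (0 : ℝ)..1, a τ) + ∫ τ in θ..(1 - θ), a τ) * supNorm u)
    (hAu : ∀ t, Au t = ∫ s in (0 : ℝ)..1,
      (G t s + (1 / (1 - ∫ τ in (0 : ℝ)..1, a τ)) *
        ∫ τ in (0 : ℝ)..1, a τ * G τ s) * f (u s)) :
    supNorm u ≤ supNorm Au := by
  obtain ⟨hθ0, hθ2⟩ := hθ
  set α := ∫ t in (0 : ℝ)..1, a t with hαdef
  set β := ∫ t in θ..(1 - θ), a t with hβdef
  set c := 1 / (1 - α) with hcdef
  clear_value α β c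
  have hθ1 : θ ≤ 1 - θ := by linarith
  have hθI : θ ∈ Set.Icc (0:ℝ) 1 := ⟨hθ0.le, by linarith⟩
  have h1θI : (1 - θ) ∈ Set.Icc (0:ℝ) 1 := ⟨by linarith, by linarith⟩
  have h1α : 0 < 1 - α := by linarith
  have hc0 : 0 < c := by rw [hcdef]; positivity
  have hβ0 : 0 ≤ β := by
    rw [hβdef]
    apply intervalIntegral.integral_nonneg hθ1
    intro t ht
    exact ha0 t ⟨by linarith [ht.1], by linarith [ht.2]⟩
  have hγ : 0 < 1 - α + β := by linarith
  have hcoef : 0 < θ ^ 3 * (1 - α + β) := by positivity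
  have hNu : 0 < supNorm u := by nlinarith [hularge]
  -- f v ≥ δ v for v ≥ ρhat
  have hfδ' : ∀ v : ℝ, ρhat ≤ v → δ * v ≤ f v := by
    intro v hv
    rcases eq_or_lt_of_le hv with rfl | h
    · have ht1 : Filter.Tendsto f (nhdsWithin ρhat (Set.Ioi ρhat)) (nhds (f ρhat)) :=
        (hf ρhat hρhat.le).mono_left
          (nhdsWithin_mono ρhat (fun x hx => le_of_lt (hρhat.trans hx)))
      have ht2 : Filter.Tendsto (fun w => δ * w) (nhdsWithin ρhat (Set.Ioi ρhat))
          (nhds (δ * ρhat)) :=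
        ((continuous_const.mul continuous_id).tendsto ρhat).mono_left nhdsWithin_le_nhds
      exact le_of_tendsto_of_tendsto ht2 ht1
        (Filter.eventually_of_mem self_mem_nhdsWithin (fun x hx => hfδ x hx))
    · exact hfδ v h
  -- continuity facts
  have hGc : Continuous (fun p : ℝ × ℝ => G p.1 p.2) := G_cont
  have hGc1 : ∀ s : ℝ, Continuous (fun τ => G τ s) := fun s =>
    hGc.comp (continuous_id.prodMk continuous_const)
  have hGc2 : ∀ t : ℝ, Continuous (fun s => G t s) := fun t =>
    hGc.comp (continuous_const.prodMk continuous_id)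
  set atil := fun τ : ℝ => a (max 0 (min 1 τ)) with hatil
  have hatilc : Continuous atil := by
    apply ha.comp_continuous (by fun_prop)
    intro x
    exact ⟨le_max_left _ _, max_le zero_le_one (min_le_left _ _)⟩
  set Φ := fun s : ℝ => ∫ τ in (0:ℝ)..1, a τ * G τ s with hΦdef
  clear_value Φ
  have hΦeq : ∀ s, Φ s = ∫ τ in (0:ℝ)..1, atil τ * G τ s := by
    intro s
    rw [hΦdef]
    apply intervalIntegral.integral_congr
    intro τ hτ
    rw [Set.uIcc_of_le zero_le_one] at hτ
    simp only [hatil, min_eq_right hτ.2, max_eq_right hτ.1]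
  have hΦc : Continuous Φ := by
    have heq : Φ = fun s => ∫ τ in (0:ℝ)..1, atil τ * G τ s := funext hΦeq
    rw [heq]
    have huc : Continuous (Function.uncurry fun (s τ : ℝ) => atil τ * G τ s) := by
      show Continuous fun p : ℝ × ℝ => atil p.2 * G p.2 p.1
      exact (hatilc.comp continuous_snd).mul (hGc.comp (continuous_snd.prodMk continuous_fst))
    exact intervalIntegral.continuous_parametric_intervalIntegral_of_continuous' huc 0 1
  have hfuc : ContinuousOn (fun s => f (u s)) (Set.Icc 0 1) :=
    hf.comp hu (fun s hs => hu0 s hs)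
  have hfu0 : ∀ s ∈ Set.Icc (0:ℝ) 1, 0 ≤ f (u s) := fun s hs => hf0 _ (hu0 s hs)
  -- integrability of τ ↦ a τ * G τ s on subintervals of [0,1]
  have haGint : ∀ s : ℝ, ∀ p q : ℝ, p ∈ Set.Icc (0:ℝ) 1 → q ∈ Set.Icc (0:ℝ) 1 →
      IntervalIntegrable (fun τ => a τ * G τ s) MeasureTheory.volume p q := by
    intro s p q hp hq
    apply ContinuousOn.intervalIntegrable
    exact (ha.mono (Set.uIcc_subset_Icc hp hq)).mul (hGc1 s).continuousOn
  -- pointwise bounds on Φ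
  have hΦ0 : ∀ s ∈ Set.Icc (0:ℝ) 1, 0 ≤ Φ s := by
    intro s hs
    rw [hΦdef]
    apply intervalIntegral.integral_nonneg zero_le_one
    intro τ hτ
    exact mul_nonneg (ha0 τ hτ) (G_nonneg hτ hs)
  have hΦub : ∀ s ∈ Set.Icc (0:ℝ) 1, Φ s ≤ α / 6 := by
    intro s hs
    have h1 : Φ s ≤ ∫ τ in (0:ℝ)..1, a τ * (1/6) := by
      rw [hΦdef]
      apply intervalIntegral.integral_mono_on zero_le_one
        (haGint s 0 1 (Set.left_mem_Icc.2 zero_le_one) (Set.right_mem_Icc.2 zero_le_one))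
        (((ha.mono (Set.uIcc_of_le zero_le_one).le).mul continuousOn_const).intervalIntegrable)
      intro τ hτ
      exact mul_le_mul_of_nonneg_left (G_upper hτ hs) (ha0 τ hτ)
    rw [intervalIntegral.integral_mul_const] at h1
    linarith
  have hΦlb : ∀ s ∈ Set.Icc (0:ℝ) 1, θ ^ 3 * (s * (1 - s) ^ 2 / 6) * β ≤ Φ s := by
    intro s hs
    have hsplit1 : (∫ τ in (0:ℝ)..θ, a τ * G τ s) + ∫ τ in θ..1, a τ * G τ s = Φ s := by
      rw [hΦdef]
      exact intervalIntegral.integral_add_adjacent_intervals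
        (haGint s 0 θ (Set.left_mem_Icc.2 zero_le_one) hθI)
        (haGint s θ 1 hθI (Set.right_mem_Icc.2 zero_le_one))
    have hsplit2 : (∫ τ in θ..(1-θ), a τ * G τ s) + ∫ τ in (1-θ)..1, a τ * G τ s
        = ∫ τ in θ..1, a τ * G τ s :=
      intervalIntegral.integral_add_adjacent_intervals
        (haGint s θ (1-θ) hθI h1θI)
        (haGint s (1-θ) 1 h1θI (Set.right_mem_Icc.2 zero_le_one))
    have h01 : (0:ℝ) ≤ ∫ τ in (0:ℝ)..θ, a τ * G τ s := by
      apply intervalIntegral.integral_nonneg hθ0.le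
      intro τ hτ
      have hτI : τ ∈ Set.Icc (0:ℝ) 1 := ⟨hτ.1, by linarith [hτ.2]⟩
      exact mul_nonneg (ha0 τ hτI) (G_nonneg hτI hs)
    have h02 : (0:ℝ) ≤ ∫ τ in (1-θ)..1, a τ * G τ s := by
      apply intervalIntegral.integral_nonneg (by linarith)
      intro τ hτ
      have hτI : τ ∈ Set.Icc (0:ℝ) 1 := ⟨by linarith [hτ.1], hτ.2⟩
      exact mul_nonneg (ha0 τ hτI) (G_nonneg hτI hs)
    have hmid : θ ^ 3 * (s * (1 - s) ^ 2 / 6) * β ≤ ∫ τ in θ..(1-θ), a τ * G τ s := by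
      have h1 : (∫ τ in θ..(1-θ), a τ * (θ ^ 3 * (s * (1 - s) ^ 2 / 6)))
          ≤ ∫ τ in θ..(1-θ), a τ * G τ s := by
        apply intervalIntegral.integral_mono_on hθ1
          (((ha.mono (Set.uIcc_subset_Icc hθI h1θI)).mul continuousOn_const).intervalIntegrable)
          (haGint s θ (1-θ) hθI h1θI)
        intro τ hτ
        have hτI : τ ∈ Set.Icc (0:ℝ) 1 := ⟨by linarith [hτ.1], by linarith [hτ.2]⟩
        apply mul_le_mul_of_nonneg_left _ (ha0 τ hτI)
        have h2 : τ ^ 3 * (s * (1 - s) ^ 2 / 6) ≤ G τ s := G_lower hτI hs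
        have h3 : θ ^ 3 ≤ τ ^ 3 := pow_le_pow_left₀ hθ0.le hτ.1 3
        have h4 : 0 ≤ s * (1 - s) ^ 2 / 6 := by
          have := hs.1; have := hs.2; positivity
        nlinarith
      rw [intervalIntegral.integral_mul_const, ← hβdef] at h1
      linarith [h1]
    linarith
  -- the kernel
  have hKc : ∀ t : ℝ, ContinuousOn (fun s => (G t s + c * Φ s) * f (u s)) (Set.Icc 0 1) :=
    fun t => (((hGc2 t).continuousOn).add (continuous_const.mul hΦc).continuousOn).mul hfuc
  have hKint : ∀ t : ℝ, ∀ p q : ℝ, p ∈ Set.Icc (0:ℝ) 1 → q ∈ Set.Icc (0:ℝ) 1 →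
      IntervalIntegrable (fun s => (G t s + c * Φ s) * f (u s)) MeasureTheory.volume p q :=
    fun t p q hp hq => ((hKc t).mono (Set.uIcc_subset_Icc hp hq)).intervalIntegrable
  have hK0 : ∀ t ∈ Set.Icc (0:ℝ) 1, ∀ s ∈ Set.Icc (0:ℝ) 1,
      0 ≤ (G t s + c * Φ s) * f (u s) := by
    intro t ht s hs
    exact mul_nonneg (add_nonneg (G_nonneg ht hs) (mul_nonneg hc0.le (hΦ0 s hs))) (hfu0 s hs)
  have hAu' : ∀ t, Au t = ∫ s in (0:ℝ)..1, (G t s + c * Φ s) * f (u s) := by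
    intro t; rw [hAu t]; simp only [hΦdef]
  -- the polynomial integral
  have hP : ∀ s : ℝ, HasDerivAt (fun x : ℝ => x^2/12 - x^3/9 + x^4/24) (s * (1-s)^2/6) s := by
    intro s
    have h : HasDerivAt (fun x : ℝ => x^2/12 - x^3/9 + x^4/24) _ s := (((hasDerivAt_pow 2 s).div_const 12).sub ((hasDerivAt_pow 3 s).div_const 9)).add
      ((hasDerivAt_pow 4 s).div_const 24)
    convert h using 1
    push_cast
    ring
  have hpoly : (∫ s in θ..(1-θ), s * (1-s)^2/6) = (1 - 2*θ) * (1/2 + θ - θ^2) / 36 := by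
    rw [intervalIntegral.integral_eq_sub_of_hasDerivAt (fun s _ => hP s)
      (by apply Continuous.intervalIntegrable; fun_prop)]
    ring
  -- lower bound for Au θ
  set N := supNorm u with hNdef
  clear_value N
  set C1 := θ ^ 3 * ((1 - α + β) / (1 - α)) * (δ * (θ ^ 3 * (1 - α + β) * N)) with hC1def
  clear_value C1
  have hLker : ∀ s ∈ Set.Icc θ (1 - θ), C1 * (s * (1-s)^2/6) ≤ (G θ s + c * Φ s) * f (u s) := by
    intro s hs
    have hsI : s ∈ Set.Icc (0:ℝ) 1 := ⟨by linarith [hs.1], by linarith [hs.2]⟩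
    have hh0 : 0 ≤ s * (1 - s) ^ 2 / 6 := by
      have := hsI.1; have := hsI.2; positivity
    have e1 : θ ^ 3 * (s * (1-s)^2/6) * ((1 - α + β) / (1 - α)) ≤ G θ s + c * Φ s := by
      have g1 : θ ^ 3 * (s * (1 - s) ^ 2 / 6) ≤ G θ s := G_lower hθI hsI
      have g2 : c * (θ ^ 3 * (s * (1 - s) ^ 2 / 6) * β) ≤ c * Φ s :=
        mul_le_mul_of_nonneg_left (hΦlb s hsI) hc0.le
      have g3 : θ ^ 3 * (s * (1-s)^2/6) * ((1 - α + β) / (1 - α))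
          = θ ^ 3 * (s * (1 - s) ^ 2 / 6) + c * (θ ^ 3 * (s * (1 - s) ^ 2 / 6) * β) := by
        rw [hcdef]
        field_simp
      linarith
    have e2 : δ * (θ ^ 3 * (1 - α + β) * N) ≤ f (u s) := by
      have h5 : θ ^ 3 * (1 - α + β) * N ≤ u s := huK s hs
      have h6 : ρhat ≤ u s := hularge.trans h5
      calc δ * (θ ^ 3 * (1 - α + β) * N) ≤ δ * u s := by
            exact mul_le_mul_of_nonneg_left h5 hδ.le
        _ ≤ f (u s) := hfδ' (u s) h6
    have e1' : (0:ℝ) ≤ θ ^ 3 * (s * (1-s)^2/6) * ((1 - α + β) / (1 - α)) := by positivity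
    have e2' : (0:ℝ) ≤ δ * (θ ^ 3 * (1 - α + β) * N) := by positivity
    calc C1 * (s * (1-s)^2/6)
        = (θ ^ 3 * (s * (1-s)^2/6) * ((1 - α + β) / (1 - α))) *
          (δ * (θ ^ 3 * (1 - α + β) * N)) := by rw [hC1def]; ring
      _ ≤ (G θ s + c * Φ s) * f (u s) := mul_le_mul e1 e2 e2' (e1'.trans e1)
  have hmidA : C1 * ((1 - 2*θ) * (1/2 + θ - θ^2) / 36)
      ≤ ∫ s in θ..(1-θ), (G θ s + c * Φ s) * f (u s) := by
    have h1 : (∫ s in θ..(1-θ), C1 * (s * (1-s)^2/6))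
        ≤ ∫ s in θ..(1-θ), (G θ s + c * Φ s) * f (u s) := by
      apply intervalIntegral.integral_mono_on hθ1
        (by apply Continuous.intervalIntegrable; fun_prop)
        (hKint θ θ (1-θ) hθI h1θI)
      exact hLker
    rw [intervalIntegral.integral_const_mul, hpoly] at h1
    exact h1
  have hsplitA1 : (∫ s in (0:ℝ)..θ, (G θ s + c * Φ s) * f (u s))
      + ∫ s in θ..1, (G θ s + c * Φ s) * f (u s)
      = ∫ s in (0:ℝ)..1, (G θ s + c * Φ s) * f (u s) :=
    intervalIntegral.integral_add_adjacent_intervals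
      (hKint θ 0 θ (Set.left_mem_Icc.2 zero_le_one) hθI)
      (hKint θ θ 1 hθI (Set.right_mem_Icc.2 zero_le_one))
  have hsplitA2 : (∫ s in θ..(1-θ), (G θ s + c * Φ s) * f (u s))
      + ∫ s in (1-θ)..1, (G θ s + c * Φ s) * f (u s)
      = ∫ s in θ..1, (G θ s + c * Φ s) * f (u s) :=
    intervalIntegral.integral_add_adjacent_intervals
      (hKint θ θ (1-θ) hθI h1θI)
      (hKint θ (1-θ) 1 h1θI (Set.right_mem_Icc.2 zero_le_one))
  have hA1 : (0:ℝ) ≤ ∫ s in (0:ℝ)..θ, (G θ s + c * Φ s) * f (u s) := by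
    apply intervalIntegral.integral_nonneg hθ0.le
    intro s hs
    exact hK0 θ hθI s ⟨hs.1, by linarith [hs.2]⟩
  have hA2 : (0:ℝ) ≤ ∫ s in (1-θ)..1, (G θ s + c * Φ s) * f (u s) := by
    apply intervalIntegral.integral_nonneg (by linarith)
    intro s hs
    exact hK0 θ hθI s ⟨by linarith [hs.1], hs.2⟩
  have hAuθ : C1 * ((1 - 2*θ) * (1/2 + θ - θ^2) / 36) ≤ Au θ :=
    calc C1 * ((1 - 2*θ) * (1/2 + θ - θ^2) / 36)
        ≤ ∫ s in θ..(1-θ), (G θ s + c * Φ s) * f (u s) := hmidA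
      _ ≤ (∫ s in θ..(1-θ), (G θ s + c * Φ s) * f (u s))
          + ∫ s in (1-θ)..1, (G θ s + c * Φ s) * f (u s) := le_add_of_nonneg_right hA2
      _ = ∫ s in θ..1, (G θ s + c * Φ s) * f (u s) := hsplitA2
      _ ≤ (∫ s in (0:ℝ)..θ, (G θ s + c * Φ s) * f (u s))
          + ∫ s in θ..1, (G θ s + c * Φ s) * f (u s) := le_add_of_nonneg_left hA1
      _ = ∫ s in (0:ℝ)..1, (G θ s + c * Φ s) * f (u s) := hsplitA1
      _ = Au θ := (hAu' θ).symm
  have hfinal1 : N ≤ Au θ := by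
    have hfac : C1 * ((1 - 2*θ) * (1/2 + θ - θ^2) / 36)
        = (δ * (θ ^ 6 / 36) * ((1 - α + β) ^ 2 / (1 - α)) * (1 - 2 * θ) * (1/2 + θ - θ^2)) * N := by
      rw [hC1def]
      ring
    calc N = 1 * N := (one_mul N).symm
      _ ≤ (δ * (θ ^ 6 / 36) * ((1 - α + β) ^ 2 / (1 - α)) * (1 - 2 * θ) * (1/2 + θ - θ^2)) * N :=
          mul_le_mul_of_nonneg_right hδge hNu.le
      _ = C1 * ((1 - 2*θ) * (1/2 + θ - θ^2) / 36) := hfac.symm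
      _ ≤ Au θ := hAuθ
  -- Au θ ≤ supNorm Au
  obtain ⟨Cf, hCf⟩ := IsCompact.exists_bound_of_continuousOn isCompact_Icc hfuc
  have hAupos : ∀ t ∈ Set.Icc (0:ℝ) 1, 0 ≤ Au t := by
    intro t ht
    rw [hAu' t]
    apply intervalIntegral.integral_nonneg zero_le_one
    intro s hs
    exact hK0 t ht s hs
  set M := (1/6 + c * (α/6)) * Cf with hMdef
  clear_value M
  have hAub : ∀ t ∈ Set.Icc (0:ℝ) 1, Au t ≤ M := by
    intro t ht
    rw [hAu' t]
    have h1 : (∫ s in (0:ℝ)..1, (G t s + c * Φ s) * f (u s)) ≤ ∫ s in (0:ℝ)..1, M := by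
      apply intervalIntegral.integral_mono_on zero_le_one
        (hKint t 0 1 (Set.left_mem_Icc.2 zero_le_one) (Set.right_mem_Icc.2 zero_le_one))
        intervalIntegrable_const
      intro s hs
      have hb1 : G t s + c * Φ s ≤ 1/6 + c * (α/6) :=
        add_le_add (G_upper ht hs) (mul_le_mul_of_nonneg_left (hΦub s hs) hc0.le)
      have hb2 : f (u s) ≤ Cf := (le_abs_self _).trans (by simpa using hCf s hs)
      have hb0 : 0 ≤ G t s + c * Φ s :=
        add_nonneg (G_nonneg ht hs) (mul_nonneg hc0.le (hΦ0 s hs))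
      calc (G t s + c * Φ s) * f (u s) ≤ (1/6 + c * (α/6)) * Cf :=
            mul_le_mul hb1 hb2 (hfu0 s hs)
              (add_nonneg (by norm_num) (mul_nonneg hc0.le (div_nonneg hα0.le (by norm_num))))
        _ = M := hMdef.symm
    rw [intervalIntegral.integral_const, smul_eq_mul] at h1
    exact h1.trans_eq (by ring)
  have hbdd : BddAbove (Set.range fun t : Set.Icc (0:ℝ) 1 => |Au ↑t|) := by
    refine ⟨M, ?_⟩
    rintro x ⟨⟨t, ht⟩, rfl⟩
    simp only
    rw [abs_of_nonneg (hAupos t ht)]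
    exact hAub t ht
  have hfinal2 : Au θ ≤ supNorm Au := by
    have h1 : |Au θ| ≤ supNorm Au := le_ciSup hbdd ⟨θ, hθI⟩
    exact (le_abs_self _).trans h1
  exact hfinal1.trans hfinal2
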